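/- arXiv:1212.5853 — 3 statements merged into one kernel-verified Lean document; each statement's English description precedes it below -/
import Mathlib

section
/- Let F be an endofunctor on a category C with terminal object 1. If the limit L of the inverse sequence ⋯ → F³1 → F²1 → F1 → 1 (with connecting maps Fⁿ! where ! : F1 → 1 is the unique map) exists and is preserved by F, then L carries a canonical F-coalgebra structure making it a terminal coalgebra for F. -/
open CategoryTheory Limits Opposite

universe v u

variable {C : Type u} [Category.{v} C]

/-- The `n`-fold application `Fⁿ 1` of an endofunctor to the terminal object. -/
def iterTerminalObj (F : C ⥤ C) (T : C) : ℕ → C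
  | 0 => T
  | n + 1 => F.obj (iterTerminalObj F T n)

/-- The connecting maps `Fⁿ⁺¹ 1 = Fⁿ(F1) ⟶ Fⁿ 1`, namely `Fⁿ !` where `! : F 1 ⟶ 1`. -/
def iterTerminalMap (F : C ⥤ C) {T : C} (hT : IsTerminal T) :
    ∀ n : ℕ, iterTerminalObj F T (n + 1) ⟶ iterTerminalObj F T n
  | 0 => hT.from _
  | n + 1 => F.map (iterTerminalMap F hT n)

/-- The inverse sequence `⋯ ⟶ F³1 ⟶ F²1 ⟶ F1 ⟶ 1` as a functor `ℕᵒᵖ ⥤ C`. -/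
def adamekChain (F : C ⥤ C) {T : C} (hT : IsTerminal T) : ℕᵒᵖ ⥤ C :=
  Functor.ofOpSequence (iterTerminalMap F hT)

lemma adamekChain_map_succ (F : C ⥤ C) {T : C} (hT : IsTerminal T) (n : ℕ) :
    (adamekChain F hT).map (homOfLE (Nat.le_add_right n 1)).op = iterTerminalMap F hT n :=
  Functor.ofOpSequence_map_homOfLE_succ _ n

/-- `F` applied to a connecting map of the chain is the shifted connecting map. -/
lemma adamekChain_shift (F : C ⥤ C) {T : C} (hT : IsTerminal T) :
    ∀ {n m : ℕ} (h : n ≤ m),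
      F.map ((adamekChain F hT).map (homOfLE h).op) =
        (adamekChain F hT).map (homOfLE (Nat.succ_le_succ h)).op := by
  intro n m h
  induction m, h using Nat.le_induction with
  | base =>
      have e1 : (homOfLE (le_refl n)).op = 𝟙 (op n) := rfl
      have e2 : (homOfLE (le_refl (n+1))).op = 𝟙 (op (n+1)) := rfl
      rw [e1, e2, CategoryTheory.Functor.map_id, CategoryTheory.Functor.map_id,
        CategoryTheory.Functor.map_id]
      rfl
  | succ m h ih =>
      have e1 : (homOfLE (show n ≤ m + 1 by omega)).op =
          (homOfLE (Nat.le_add_right m 1)).op ≫ (homOfLE h).op := rfl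
      have e2 : (homOfLE (show n + 1 ≤ m + 2 by omega)).op =
          (homOfLE (Nat.le_add_right (m+1) 1)).op ≫ (homOfLE (Nat.succ_le_succ h)).op := rfl
      rw [e1, e2, Functor.map_comp, Functor.map_comp, Functor.map_comp,
        adamekChain_map_succ, adamekChain_map_succ, ih]
      rfl


/-- The shifted cone over `adamekChain ⋙ F` with apex `c.pt`. -/
def adamekConeSucc (F : C ⥤ C) {T : C} (hT : IsTerminal T)
    (c : Cone (adamekChain F hT)) : Cone (adamekChain F hT ⋙ F) where
  pt := c.pt
  π :=
    { app := fun n => c.π.app (op (n.unop + 1))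
      naturality := by
        intro n m f
        have h : m.unop ≤ n.unop := leOfHom f.unop
        have hf : f = (homOfLE h).op := rfl
        dsimp
        erw [Category.id_comp, hf, adamekChain_shift F hT h]
        exact ((c.π.naturality (homOfLE (Nat.succ_le_succ h)).op).symm.trans
          (Category.id_comp _)).symm }

/-- The legs of the cone induced by a coalgebra `(A, a)`: `A ⟶ Fⁿ1`. -/
def coalgLeg (F : C ⥤ C) {T : C} (hT : IsTerminal T) (A : Endofunctor.Coalgebra F) :
    ∀ n : ℕ, A.V ⟶ iterTerminalObj F T n
  | 0 => hT.from _
  | n + 1 => A.str ≫ F.map (coalgLeg F hT A n)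

lemma coalgLeg_succ (F : C ⥤ C) {T : C} (hT : IsTerminal T) (A : Endofunctor.Coalgebra F) :
    ∀ n : ℕ, coalgLeg F hT A (n + 1) ≫ iterTerminalMap F hT n = coalgLeg F hT A n
  | 0 => hT.hom_ext _ _
  | n + 1 => by
      show (A.str ≫ F.map _) ≫ F.map (iterTerminalMap F hT n) = A.str ≫ F.map _
      rw [Category.assoc, ← F.map_comp, coalgLeg_succ F hT A n]

lemma coalgLeg_map (F : C ⥤ C) {T : C} (hT : IsTerminal T) (A : Endofunctor.Coalgebra F)
    {n m : ℕ} (h : n ≤ m) :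
    coalgLeg F hT A m ≫ (adamekChain F hT).map (homOfLE h).op = coalgLeg F hT A n := by
  induction m, h using Nat.le_induction with
  | base =>
      have e1 : (homOfLE (le_refl n)).op = 𝟙 (op n) := rfl
      rw [e1, CategoryTheory.Functor.map_id]
      exact Category.comp_id _
  | succ m h ih =>
      have e1 : (homOfLE (show n ≤ m + 1 by omega)).op =
          (homOfLE (Nat.le_add_right m 1)).op ≫ (homOfLE h).op := rfl
      erw [e1, Functor.map_comp, adamekChain_map_succ, ← Category.assoc,
        coalgLeg_succ, ih]

/-- The cone over the chain induced by a coalgebra `(A, a)`. -/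
def coalgCone (F : C ⥤ C) {T : C} (hT : IsTerminal T)
    (A : Endofunctor.Coalgebra F) : Cone (adamekChain F hT) where
  pt := A.V
  π :=
    { app := fun n => coalgLeg F hT A n.unop
      naturality := by
        intro n m f
        have h : m.unop ≤ n.unop := leOfHom f.unop
        have hf : f = (homOfLE h).op := rfl
        dsimp
        erw [Category.id_comp, hf, coalgLeg_map F hT A h] }

/-- **Adámek's theorem**: if the limit of `⋯ ⟶ F²1 ⟶ F1 ⟶ 1` exists and is preserved by `F`
(i.e. `F` of the limit cone is a limit cone over the shifted diagram), then the limit carries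
a canonical `F`-coalgebra structure making it a terminal coalgebra for `F`. -/
theorem adamek (F : C ⥤ C) {T : C} (hT : IsTerminal T)
    (c : Cone (adamekChain F hT)) (hc : IsLimit c)
    (hFc : IsLimit (F.mapCone c)) :
    ∃ str : c.pt ⟶ F.obj c.pt,
      Nonempty (IsTerminal (⟨c.pt, str⟩ : Endofunctor.Coalgebra F)) := by
  refine ⟨hFc.lift (adamekConeSucc F hT c), ⟨?_⟩⟩
  set str : c.pt ⟶ F.obj c.pt := hFc.lift (adamekConeSucc F hT c) with hstr
  have str_fac : ∀ n : ℕ, str ≫ F.map (c.π.app (op n)) = c.π.app (op (n + 1)) :=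
    fun n => hFc.fac (adamekConeSucc F hT c) (op n)
  -- any coalgebra hom into `(c.pt, str)` has underlying map compatible with the legs
  have key : ∀ (A : Endofunctor.Coalgebra F)
      (g : A ⟶ (⟨c.pt, str⟩ : Endofunctor.Coalgebra F)) (n : ℕ),
      g.f ≫ c.π.app (op n) = coalgLeg F hT A n := by
    intro A g n
    induction n with
    | zero => exact hT.hom_ext _ _
    | succ n ih =>
        have e : g.f ≫ str ≫ F.map (c.π.app (op n)) =
            A.str ≫ F.map (g.f ≫ c.π.app (op n)) := by
          rw [← Category.assoc, ← g.h, Category.assoc, ← F.map_comp]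
        rw [str_fac] at e
        erw [e, ih]
        rfl
  have mkHom : ∀ A : Endofunctor.Coalgebra F,
      A ⟶ (⟨c.pt, str⟩ : Endofunctor.Coalgebra F) := by
    intro A
    refine ⟨hc.lift (coalgCone F hT A), ?_⟩
    apply hFc.hom_ext
    intro n
    induction n using Opposite.rec with
    | op n =>
    have fac : ∀ k : ℕ, hc.lift (coalgCone F hT A) ≫ c.π.app (op k) =
        coalgLeg F hT A k := fun k => hc.fac _ (op k)
    show (A.str ≫ F.map (hc.lift (coalgCone F hT A))) ≫ F.map (c.π.app (op n)) =
      (hc.lift (coalgCone F hT A) ≫ str) ≫ F.map (c.π.app (op n))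
    erw [Category.assoc, ← F.map_comp, fac n, Category.assoc, str_fac, fac (n + 1)]
    rfl
  have uniq : ∀ (A : Endofunctor.Coalgebra F)
      (g₁ g₂ : A ⟶ (⟨c.pt, str⟩ : Endofunctor.Coalgebra F)), g₁ = g₂ := by
    intro A g₁ g₂
    ext : 1
    apply hc.hom_ext
    intro n
    induction n using Opposite.rec with
    | op n => rw [key A g₁ n, key A g₂ n]
  exact IsTerminal.ofUniqueHom mkHom (fun A m => uniq A m (mkHom A))
end

section
/- If V is an infinitely distributive category (finite products, small coproducts, with products distributing over coproducts), then the category of V-graphs is also infinitely distributive. -/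
open CategoryTheory Limits

universe w w' v u v' u' v'' u''

/-- A `V`-graph: a set of objects together with a `V`-object of arrows between each
ordered pair of objects. -/
structure VGraph (V : Type u) [Category.{v} V] : Type (max u (w + 1)) where
  obj : Type w
  hom : obj → obj → V

namespace VGraph

variable {V : Type u} [Category.{v} V]

/-- A morphism of `V`-graphs: a function on objects together with morphisms on homs. -/
structure Hom (A B : VGraph.{w} V) : Type (max w v) where
  f : A.obj → B.obj
  φ : ∀ a a' : A.obj, A.hom a a' ⟶ B.hom (f a) (f a')

theorem Hom.hext {A B : VGraph.{w} V} {F G : Hom A B}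
    (h1 : F.f = G.f) (h2 : HEq F.φ G.φ) : F = G := by
  cases F; cases G; cases h1; cases h2; rfl

instance : Category.{max w v} (VGraph.{w} V) where
  Hom := Hom
  id A := ⟨id, fun _ _ => 𝟙 _⟩
  comp F G := ⟨G.f ∘ F.f, fun a a' => F.φ a a' ≫ G.φ (F.f a) (F.f a')⟩
  id_comp F := Hom.hext rfl (heq_of_eq (by funext a a'; exact Category.id_comp _))
  comp_id F := Hom.hext rfl (heq_of_eq (by funext a a'; exact Category.comp_id _))
  assoc F G H := Hom.hext rfl (heq_of_eq (by funext a a'; exact Category.assoc _ _ _))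

end VGraph

/-- The functor `H₊ : V-Gph ⥤ W-Gph` induced by `H : V ⥤ W`: identity on object sets,
`H` on hom-objects. -/
def mapGraph {V : Type u} [Category.{v} V] {W : Type u'} [Category.{v'} W] (H : V ⥤ W) :
    VGraph.{w} V ⥤ VGraph.{w} W where
  obj A := ⟨A.obj, fun a a' => H.obj (A.hom a a')⟩
  map F := ⟨F.f, fun a a' => H.map (F.φ a a')⟩
  map_id A := VGraph.Hom.hext rfl (heq_of_eq (by funext a a'; exact H.map_id _))
  map_comp F G := VGraph.Hom.hext rfl (heq_of_eq (by funext a a'; exact H.map_comp _ _))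

/-- An infinitely distributive category: a category with finite products and small
coproducts in which, for every object `X` and every small family `(Yᵢ)`, the canonical map
`∐ᵢ (X × Yᵢ) ⟶ X × ∐ᵢ Yᵢ` is an isomorphism. -/
structure InfinitelyDistributive (V : Type u) [Category.{v} V] : Type (max u (v + 1)) where
  [hasFiniteProducts : HasFiniteProducts V]
  [hasCoproducts : HasCoproducts.{v} V]
  distrib : ∀ (X : V) {ι : Type v} (Y : ι → V),
    IsIso (Sigma.desc fun i => prod.map (𝟙 X) (Sigma.ι Y i) :
      (∐ fun i => X ⨯ Y i) ⟶ X ⨯ (∐ Y))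

namespace VGraphAux

open VGraph

/-- Transport of a colimit cofan along isomorphisms. -/
def isColimitCofanOfIso {C : Type u''} [Category.{v''} C] {ι : Type w'} {P Q : ι → C}
    (c : Cofan P) (d : Cofan Q) (hd : IsColimit d) (e : ∀ i, Q i ≅ P i)
    (φ : d.pt ≅ c.pt) (hcomm : ∀ i, d.inj i ≫ φ.hom = (e i).hom ≫ c.inj i) : IsColimit c := by
  have hinj : ∀ i, c.inj i = (e i).inv ≫ d.inj i ≫ φ.hom := by
    intro i; rw [hcomm i, Iso.inv_hom_id_assoc]
  refine mkCofanColimit c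
    (fun t => φ.inv ≫ hd.desc (Cofan.mk t.pt fun i => (e i).hom ≫ t.inj i)) ?_ ?_
  · intro t j
    have hfac : d.inj j ≫ hd.desc (Cofan.mk t.pt fun i => (e i).hom ≫ t.inj i) =
        (e j).hom ≫ t.inj j := hd.fac (Cofan.mk t.pt fun i => (e i).hom ≫ t.inj i) ⟨j⟩
    rw [hinj j]
    simp only [Category.assoc, Iso.hom_inv_id_assoc]
    rw [hfac, Iso.inv_hom_id_assoc]
  · intro t m hm
    rw [Iso.eq_inv_comp]
    refine hd.hom_ext fun ⟨j⟩ => ?_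
    have hfac : d.inj j ≫ hd.desc (Cofan.mk t.pt fun i => (e i).hom ≫ t.inj i) =
        (e j).hom ≫ t.inj j := hd.fac (Cofan.mk t.pt fun i => (e i).hom ≫ t.inj i) ⟨j⟩
    show d.inj j ≫ φ.hom ≫ m = d.inj j ≫ hd.desc (Cofan.mk t.pt fun i => (e i).hom ≫ t.inj i)
    rw [hfac, ← Category.assoc, hcomm j, Category.assoc, hm j]

/-- `X ⨯ -` applied to an isomorphism. -/
noncomputable def prodRightIso {C : Type u''} [Category.{v''} C] (X : C) {Z Z' : C}
    [HasBinaryProducts C] (k : Z ≅ Z') : (X ⨯ Z) ≅ (X ⨯ Z') where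
  hom := prod.map (𝟙 X) k.hom
  inv := prod.map (𝟙 X) k.inv
  hom_inv_id := by rw [prod.map_map, k.hom_inv_id, Category.comp_id, prod.map_id_id]
  inv_hom_id := by rw [prod.map_map, k.inv_hom_id, Category.comp_id, prod.map_id_id]

variable {V : Type u} [Category.{v} V]

theorem gext {A B : VGraph.{v} V} {F G : A ⟶ B} (h1 : ∀ a, Hom.f F a = Hom.f G a)
    (h2 : ∀ a a', Hom.φ F a a' ≫ eqToHom (by rw [h1 a, h1 a']) = Hom.φ G a a') : F = G := by
  obtain ⟨f, φ⟩ := F; obtain ⟨g, ψ⟩ := G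
  obtain rfl : f = g := funext h1
  have : φ = ψ := by funext a a'; simpa using h2 a a'
  rw [this]

theorem gext' {A B : VGraph.{v} V} {F G : A ⟶ B} (h1 : Hom.f F = Hom.f G)
    (h2 : ∀ a a', HEq (Hom.φ F a a') (Hom.φ G a a')) : F = G := by
  obtain ⟨f, φ⟩ := F; obtain ⟨g, ψ⟩ := G
  obtain rfl : f = g := h1
  obtain rfl : φ = ψ := funext fun a => funext fun a' => eq_of_heq (h2 a a')
  rfl

@[simp] theorem comp_f {A B C : VGraph.{v} V} (F : A ⟶ B) (G : B ⟶ C) (a : A.obj) :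
    Hom.f (F ≫ G) a = Hom.f G (Hom.f F a) := rfl

@[simp] theorem comp_φ {A B C : VGraph.{v} V} (F : A ⟶ B) (G : B ⟶ C) (a a' : A.obj) :
    Hom.φ (F ≫ G) a a' = Hom.φ F a a' ≫ Hom.φ G (Hom.f F a) (Hom.f F a') := rfl

@[simp] theorem id_f {A : VGraph.{v} V} (a : A.obj) : Hom.f (𝟙 A) a = a := rfl

@[simp] theorem id_φ {A : VGraph.{v} V} (a a' : A.obj) : Hom.φ (𝟙 A) a a' = 𝟙 _ := rfl

section Products

variable [HasFiniteProducts V]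

/-- The terminal `V`-graph. -/
noncomputable def termGraph : VGraph.{v} V := ⟨PUnit, fun _ _ => ⊤_ V⟩

noncomputable instance (A : VGraph.{v} V) : Unique (A ⟶ (termGraph : VGraph.{v} V)) where
  default := ⟨fun _ => PUnit.unit, fun _ _ => terminal.from _⟩
  uniq F := gext (fun _ => rfl) (fun a a' => terminal.hom_ext _ _)

/-- The explicit product of two `V`-graphs. -/
noncomputable def prodGraph (A B : VGraph.{v} V) : VGraph.{v} V :=
  ⟨A.obj × B.obj, fun p q => A.hom p.1 q.1 ⨯ B.hom p.2 q.2⟩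

noncomputable def prodFst (A B : VGraph.{v} V) : prodGraph A B ⟶ A :=
  ⟨fun p => p.1, fun _ _ => prod.fst⟩

noncomputable def prodSnd (A B : VGraph.{v} V) : prodGraph A B ⟶ B :=
  ⟨fun p => p.2, fun _ _ => prod.snd⟩

noncomputable def prodLift {A B C : VGraph.{v} V} (F : C ⟶ A) (G : C ⟶ B) : C ⟶ prodGraph A B :=
  ⟨fun c => (Hom.f F c, Hom.f G c), fun c c' => prod.lift (Hom.φ F c c') (Hom.φ G c c')⟩

noncomputable def prodIsLimit (A B : VGraph.{v} V) :
    IsLimit (BinaryFan.mk (prodFst A B) (prodSnd A B)) :=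
  BinaryFan.IsLimit.mk _ (fun F G => prodLift F G)
    (fun F G => gext' rfl (fun c c' => heq_of_eq (prod.lift_fst _ _)))
    (fun F G => gext' rfl (fun c c' => heq_of_eq (prod.lift_snd _ _)))
    (fun F G m h1 h2 => by
      have h1' : m ≫ prodFst A B = F := h1
      have h2' : m ≫ prodSnd A B = G := h2
      have key : m = prodLift (m ≫ prodFst A B) (m ≫ prodSnd A B) := by
        refine gext' rfl (fun c c' => heq_of_eq ?_)
        refine Limits.prod.hom_ext ?_ ?_
        · exact (prod.lift_fst _ _).symm
        · exact (prod.lift_snd _ _).symm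
      rw [key, h1', h2'])

noncomputable def prodGraphIso (A B : VGraph.{v} V) [HasBinaryProducts (VGraph.{v} V)] :
    prodGraph A B ≅ A ⨯ B :=
  IsLimit.conePointUniqueUpToIso (prodIsLimit A B) (limit.isLimit _)

theorem prodGraphIso_hom_fst (A B : VGraph.{v} V) [HasBinaryProducts (VGraph.{v} V)] :
    (prodGraphIso A B).hom ≫ prod.fst = prodFst A B :=
  IsLimit.conePointUniqueUpToIso_hom_comp (prodIsLimit A B) (limit.isLimit _) ⟨WalkingPair.left⟩

theorem prodGraphIso_hom_snd (A B : VGraph.{v} V) [HasBinaryProducts (VGraph.{v} V)] :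
    (prodGraphIso A B).hom ≫ prod.snd = prodSnd A B :=
  IsLimit.conePointUniqueUpToIso_hom_comp (prodIsLimit A B) (limit.isLimit _) ⟨WalkingPair.right⟩

end Products

section Coproducts

variable [HasCoproducts.{v} V]

/-- The family of hom-objects of the explicit coproduct of `V`-graphs. -/
noncomputable def coprodFam {ι : Type v} (A : ι → VGraph.{v} V) (p q : Σ i, (A i).obj) :
    ULift.{v} (PLift (p.1 = q.1)) → V :=
  fun h => (A q.1).hom (h.down.down ▸ p.2) q.2

/-- The explicit coproduct of a small family of `V`-graphs. -/
noncomputable def coprodGraph {ι : Type v} (A : ι → VGraph.{v} V) : VGraph.{v} V :=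
  ⟨Σ i, (A i).obj, fun p q => ∐ coprodFam A p q⟩

noncomputable def coprodInj {ι : Type v} (A : ι → VGraph.{v} V) (i : ι) : A i ⟶ coprodGraph A :=
  ⟨fun a => ⟨i, a⟩, fun a a' =>
    Sigma.ι (coprodFam A ⟨i, a⟩ ⟨i, a'⟩) (⟨⟨rfl⟩⟩ : ULift.{v} (PLift (i = i)))⟩

noncomputable def coprodDesc {ι : Type v} (A : ι → VGraph.{v} V) (t : Cofan A) :
    coprodGraph A ⟶ t.pt :=
  ⟨fun p => Hom.f (t.inj p.1) p.2, fun p q =>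
    Limits.Sigma.desc fun h =>
      match p, q, h with
      | ⟨i, a⟩, ⟨_, b⟩, ⟨⟨rfl⟩⟩ => Hom.φ (t.inj i) a b⟩

noncomputable def coprodIsColimit {ι : Type v} (A : ι → VGraph.{v} V) :
    IsColimit (Cofan.mk (coprodGraph A) (coprodInj A)) := by
  refine mkCofanColimit _ (fun t => coprodDesc A t) ?_ ?_
  · intro t j
    refine gext' rfl (fun a a' => heq_of_eq ?_)
    show Sigma.ι (coprodFam A ⟨j, a⟩ ⟨j, a'⟩) (⟨⟨rfl⟩⟩ : ULift.{v} (PLift (j = j))) ≫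
        Limits.Sigma.desc _ = Hom.φ (t.inj j) a a'
    erw [Sigma.ι_desc]
    rfl
  · intro t m hm
    have hm' : ∀ j, coprodInj A j ≫ m = t.inj j := hm
    have key : m = coprodDesc A (Cofan.mk t.pt fun i => coprodInj A i ≫ m) := by
      refine gext' rfl (fun p q => heq_of_eq ?_)
      show Hom.φ m p q = Limits.Sigma.desc _
      refine Sigma.hom_ext _ _ fun h => ?_
      erw [Sigma.ι_desc]
      obtain ⟨i, a⟩ := p
      obtain ⟨j, b⟩ := q
      obtain ⟨⟨(rfl : i = j)⟩⟩ := h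
      rfl
    have harms : (fun i => coprodInj A i ≫ m) = fun i => t.inj i := funext hm'
    rw [key, harms]
    rfl

noncomputable def coprodGraphIso {ι : Type v} (A : ι → VGraph.{v} V) [HasCoproduct A] :
    coprodGraph A ≅ ∐ A :=
  IsColimit.coconePointUniqueUpToIso (coprodIsColimit A) (colimit.isColimit _)

theorem coprodInj_coprodGraphIso {ι : Type v} (A : ι → VGraph.{v} V) [HasCoproduct A] (i : ι) :
    coprodInj A i ≫ (coprodGraphIso A).hom = Sigma.ι A i :=
  IsColimit.comp_coconePointUniqueUpToIso_hom (coprodIsColimit A) (colimit.isColimit _) ⟨i⟩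

end Coproducts

section Distrib

variable [HasFiniteProducts V] [HasCoproducts.{v} V]
variable (hd : ∀ (Xv : V) {κ : Type v} (T : κ → V),
  IsIso (Limits.Sigma.desc fun k => prod.map (𝟙 Xv) (Sigma.ι T k) :
    (∐ fun k => Xv ⨯ T k) ⟶ Xv ⨯ ∐ T))

/-- The canonical distributivity comparison map in `V`. -/
noncomputable abbrev distribHom (Xv : V) {κ : Type v} (T : κ → V) :
    (∐ fun k => Xv ⨯ T k) ⟶ Xv ⨯ ∐ T :=
  Limits.Sigma.desc fun k => prod.map (𝟙 Xv) (Sigma.ι T k)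

theorem ι_distribHom (Xv : V) {κ : Type v} (T : κ → V) (k : κ) :
    Sigma.ι (fun k => Xv ⨯ T k) k ≫ distribHom Xv T = prod.map (𝟙 Xv) (Sigma.ι T k) :=
  Sigma.ι_desc _ _

theorem distrib_cancel (Xv : V) {κ : Type v} (T : κ → V) {Z : V} (k : κ)
    (w : (∐ fun k => Xv ⨯ T k) ⟶ Z) :
    prod.map (𝟙 Xv) (Sigma.ι T k) ≫ (@inv _ _ _ _ (distribHom Xv T) (hd _ _)) ≫ w =
      Sigma.ι (fun k => Xv ⨯ T k) k ≫ w := by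
  haveI := hd Xv T
  rw [← ι_distribHom Xv T k, Category.assoc, IsIso.hom_inv_id_assoc]

noncomputable def keyHomφ (X : VGraph.{v} V) {ι : Type v} (Y : ι → VGraph.{v} V)
    (p q : Σ i, (prodGraph X (Y i)).obj) :
    (∐ coprodFam (fun i => prodGraph X (Y i)) p q) ⟶
      ((prodGraph X (coprodGraph Y)).hom (p.2.1, ⟨p.1, p.2.2⟩) (q.2.1, ⟨q.1, q.2.2⟩)) :=
  Limits.Sigma.desc fun h =>
    match p, q, h with
    | ⟨i, a⟩, ⟨_, b⟩, ⟨⟨rfl⟩⟩ =>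
        prod.map (𝟙 (X.hom a.1 b.1))
          (Sigma.ι (coprodFam Y ⟨i, a.2⟩ ⟨i, b.2⟩) (⟨⟨rfl⟩⟩ : ULift.{v} (PLift (i = i))))

theorem ι_keyHomφ (X : VGraph.{v} V) {ι : Type v} (Y : ι → VGraph.{v} V) (i : ι)
    (a b : X.obj × (Y i).obj) :
    Sigma.ι (coprodFam (fun i => prodGraph X (Y i)) ⟨i, a⟩ ⟨i, b⟩)
        (⟨⟨rfl⟩⟩ : ULift.{v} (PLift (i = i))) ≫ keyHomφ X Y ⟨i, a⟩ ⟨i, b⟩ =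
      prod.map (𝟙 (X.hom a.1 b.1))
        (Sigma.ι (coprodFam Y ⟨i, a.2⟩ ⟨i, b.2⟩) (⟨⟨rfl⟩⟩ : ULift.{v} (PLift (i = i)))) :=
  Sigma.ι_desc _ _

noncomputable def keyInvφ (X : VGraph.{v} V) {ι : Type v} (Y : ι → VGraph.{v} V)
    (p q : X.obj × Σ i, (Y i).obj) :
    ((prodGraph X (coprodGraph Y)).hom p q) ⟶
      (∐ coprodFam (fun i => prodGraph X (Y i)) ⟨p.2.1, (p.1, p.2.2)⟩ ⟨q.2.1, (q.1, q.2.2)⟩) :=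
  (@inv _ _ _ _ (distribHom (X.hom p.1 q.1) (coprodFam Y p.2 q.2)) (hd _ _)) ≫
    Limits.Sigma.desc fun h =>
      match p, q, h with
      | (x, ⟨i, y⟩), (x', ⟨_, y'⟩), ⟨⟨rfl⟩⟩ =>
          Sigma.ι (coprodFam (fun i => prodGraph X (Y i)) ⟨i, (x, y)⟩ ⟨i, (x', y')⟩)
            (⟨⟨rfl⟩⟩ : ULift.{v} (PLift (i = i)))

theorem map_ι_keyInvφ (X : VGraph.{v} V) {ι : Type v} (Y : ι → VGraph.{v} V) (i : ι)
    (x x' : X.obj) (y y' : (Y i).obj) :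
    prod.map (𝟙 (X.hom x x'))
        (Sigma.ι (coprodFam Y ⟨i, y⟩ ⟨i, y'⟩) (⟨⟨rfl⟩⟩ : ULift.{v} (PLift (i = i)))) ≫
      keyInvφ hd X Y (x, ⟨i, y⟩) (x', ⟨i, y'⟩) =
    Sigma.ι (coprodFam (fun i => prodGraph X (Y i)) ⟨i, (x, y)⟩ ⟨i, (x', y')⟩)
      (⟨⟨rfl⟩⟩ : ULift.{v} (PLift (i = i))) := by
  unfold keyInvφ
  erw [distrib_cancel hd, Sigma.ι_desc]

/-- The key isomorphism between the explicit coproduct of explicit products and the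
explicit product with the explicit coproduct. -/
noncomputable def keyIso (X : VGraph.{v} V) {ι : Type v} (Y : ι → VGraph.{v} V) :
    coprodGraph (fun i => prodGraph X (Y i)) ≅ prodGraph X (coprodGraph Y) where
  hom := ⟨fun p => (p.2.1, ⟨p.1, p.2.2⟩), keyHomφ X Y⟩
  inv := ⟨fun q => ⟨q.2.1, (q.1, q.2.2)⟩, keyInvφ hd X Y⟩
  hom_inv_id := by
    refine gext' rfl fun p q => heq_of_eq ?_
    obtain ⟨i, x, y⟩ := p
    obtain ⟨j, x', y'⟩ := q
    show keyHomφ X Y ⟨i, (x, y)⟩ ⟨j, (x', y')⟩ ≫ keyInvφ hd X Y (x, ⟨i, y⟩) (x', ⟨j, y'⟩) = 𝟙 _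
    refine Sigma.hom_ext _ _ fun h => ?_
    obtain ⟨⟨(rfl : i = j)⟩⟩ := h
    erw [← Category.assoc, ι_keyHomφ, map_ι_keyInvφ hd, Category.comp_id]
  inv_hom_id := by
    refine gext' rfl fun p q => heq_of_eq ?_
    obtain ⟨x, i, y⟩ := p
    obtain ⟨x', j, y'⟩ := q
    show keyInvφ hd X Y (x, ⟨i, y⟩) (x', ⟨j, y'⟩) ≫ keyHomφ X Y ⟨i, (x, y)⟩ ⟨j, (x', y')⟩ = 𝟙 _
    unfold keyInvφ
    erw [Category.assoc, IsIso.inv_comp_eq, Category.comp_id]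
    refine Sigma.hom_ext _ _ fun h => ?_
    obtain ⟨⟨(rfl : i = j)⟩⟩ := h
    erw [← Category.assoc, Sigma.ι_desc, ι_distribHom]
    exact ι_keyHomφ X Y i (x, y) (x', y')

theorem inj_key_fst (X : VGraph.{v} V) {ι : Type v} (Y : ι → VGraph.{v} V) (i : ι) :
    coprodInj (fun i => prodGraph X (Y i)) i ≫ (keyIso hd X Y).hom ≫
        prodFst X (coprodGraph Y) = prodFst X (Y i) := by
  refine gext' rfl fun a a' => heq_of_eq ?_
  show Sigma.ι (coprodFam (fun i => prodGraph X (Y i)) ⟨i, a⟩ ⟨i, a'⟩)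
      (⟨⟨rfl⟩⟩ : ULift.{v} (PLift (i = i))) ≫ keyHomφ X Y ⟨i, a⟩ ⟨i, a'⟩ ≫ prod.fst = prod.fst
  erw [← Category.assoc, ι_keyHomφ]
  exact (prod.map_fst _ _).trans (Category.comp_id _)

theorem inj_key_snd (X : VGraph.{v} V) {ι : Type v} (Y : ι → VGraph.{v} V) (i : ι) :
    coprodInj (fun i => prodGraph X (Y i)) i ≫ (keyIso hd X Y).hom ≫
        prodSnd X (coprodGraph Y) = prodSnd X (Y i) ≫ coprodInj Y i := by
  refine gext' rfl fun a a' => heq_of_eq ?_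
  show Sigma.ι (coprodFam (fun i => prodGraph X (Y i)) ⟨i, a⟩ ⟨i, a'⟩)
      (⟨⟨rfl⟩⟩ : ULift.{v} (PLift (i = i))) ≫ keyHomφ X Y ⟨i, a⟩ ⟨i, a'⟩ ≫ prod.snd =
    prod.snd ≫ Sigma.ι (coprodFam Y ⟨i, a.2⟩ ⟨i, a'.2⟩) (⟨⟨rfl⟩⟩ : ULift.{v} (PLift (i = i)))
  erw [← Category.assoc, ι_keyHomφ]
  exact prod.map_snd _ _

include hd in
theorem mainDistrib [HasFiniteProducts (VGraph.{v} V)] [HasCoproducts.{v} (VGraph.{v} V)]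
    (X : VGraph.{v} V) {ι : Type v} (Y : ι → VGraph.{v} V) :
    IsIso (Limits.Sigma.desc fun i => prod.map (𝟙 X) (Sigma.ι Y i) :
      (∐ fun i => X ⨯ Y i) ⟶ X ⨯ ∐ Y) := by
  have hc : IsColimit (Cofan.mk (X ⨯ ∐ Y) fun i => prod.map (𝟙 X) (Sigma.ι Y i)) := by
    refine isColimitCofanOfIso _
      (Cofan.mk (coprodGraph fun i => prodGraph X (Y i))
        (coprodInj fun i => prodGraph X (Y i)))
      (coprodIsColimit _) (fun i => prodGraphIso X (Y i))
      ((keyIso hd X Y) ≪≫ prodGraphIso X (coprodGraph Y) ≪≫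
        prodRightIso X (coprodGraphIso Y)) (fun i => ?_)
    show coprodInj (fun i => prodGraph X (Y i)) i ≫ (keyIso hd X Y).hom ≫
        (prodGraphIso X (coprodGraph Y)).hom ≫ prod.map (𝟙 X) (coprodGraphIso Y).hom =
      (prodGraphIso X (Y i)).hom ≫ prod.map (𝟙 X) (Sigma.ι Y i)
    refine Limits.prod.hom_ext ?_ ?_
    · simp only [Category.assoc, prod.map_fst, Category.comp_id]
      rw [prodGraphIso_hom_fst X (coprodGraph Y), prodGraphIso_hom_fst X (Y i)]
      exact inj_key_fst hd X Y i
    · simp only [Category.assoc, prod.map_snd]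
      rw [reassoc_of% (prodGraphIso_hom_snd X (coprodGraph Y))]
      rw [reassoc_of% (prodGraphIso_hom_snd X (Y i))]
      rw [reassoc_of% (inj_key_snd hd X Y i)]
      rw [coprodInj_coprodGraphIso]
  have heq : (Limits.Sigma.desc fun i => prod.map (𝟙 X) (Sigma.ι Y i) :
      (∐ fun i => X ⨯ Y i) ⟶ X ⨯ ∐ Y) = (colimit.isoColimitCocone ⟨_, hc⟩).hom := by
    refine Sigma.hom_ext _ _ fun i => ?_
    rw [Sigma.ι_desc, colimit.isoColimitCocone_ι_hom]
    rfl
  rw [heq]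
  infer_instance

end Distrib

section Instances

variable (V) [HasFiniteProducts V] [HasCoproducts.{v} V]

theorem hasTerminalVGraph : HasTerminal (VGraph.{v} V) :=
  hasTerminal_of_unique termGraph

theorem hasBinaryProductsVGraph : HasBinaryProducts (VGraph.{v} V) := by
  haveI : ∀ (A B : VGraph.{v} V), HasLimit (pair A B) :=
    fun A B => HasLimit.mk ⟨_, prodIsLimit A B⟩
  exact hasBinaryProducts_of_hasLimit_pair _

theorem hasFiniteProductsVGraph : HasFiniteProducts (VGraph.{v} V) := by
  haveI := hasTerminalVGraph V
  haveI := hasBinaryProductsVGraph V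
  exact hasFiniteProducts_of_has_binary_and_terminal

theorem hasCoproductsVGraph : HasCoproducts.{v} (VGraph.{v} V) := fun ι => by
  haveI : ∀ A : ι → VGraph.{v} V, HasCoproduct A :=
    fun A => HasColimit.mk ⟨_, coprodIsColimit A⟩
  exact ⟨fun F => hasColimit_of_iso Discrete.natIsoFunctor⟩

end Instances

end VGraphAux

/-- If `V` is an infinitely distributive category, then the category of `V`-graphs is also
infinitely distributive. -/
theorem vgraph_infinitelyDistributive (V : Type u) [Category.{v} V]
    (h : InfinitelyDistributive V) :
    Nonempty (InfinitelyDistributive (VGraph.{v} V)) := by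
  haveI := h.hasFiniteProducts
  haveI := h.hasCoproducts
  haveI := VGraphAux.hasFiniteProductsVGraph V
  haveI := VGraphAux.hasCoproductsVGraph V
  exact ⟨⟨fun X {ι} Y => VGraphAux.mainDistrib h.distrib X Y⟩⟩
end

section
/- The endofunctor V ↦ V-Gph on the category of locally small categories preserves the limit of any inverse sequence of categories; more precisely, if V is the limit in CAT of a tower ⋯ → V₂ → V₁ → V₀, then V-Gph is canonically the limit of ⋯ → V₂-Gph → V₁-Gph → V₀-Gph with connecting functors given by applying (−)₊. -/
open CategoryTheory Limits

universe w w' v u v' u' v'' u''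

/-- The enriched-graph endofunctor `V ↦ V-Gph`, `H ↦ H₊` on the category of categories. -/
def vgraphEndofunctor : Cat.{u, u + 1} ⥤ Cat.{u, u + 1} where
  obj C := Cat.of (VGraph.{u} C)
  map F := (mapGraph F.toFunctor).toCatHom
  map_id _ := rfl
  map_comp _ _ := rfl


section AuxToolkit

namespace VGraph

variable {V : Type u} [Category.{v} V]

theorem comp_f' {A B C : VGraph.{w} V} (F : A ⟶ B) (G : B ⟶ C) (a : A.obj) :
    (F ≫ G).f a = G.f (F.f a) := rfl

theorem comp_φ' {A B C : VGraph.{w} V} (F : A ⟶ B) (G : B ⟶ C) (a a' : A.obj) :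
    (F ≫ G).φ a a' = F.φ a a' ≫ G.φ (F.f a) (F.f a') := rfl

theorem obj_congr {A B : VGraph.{w} V} (h : A = B) : A.obj = B.obj := congrArg VGraph.obj h

theorem hom_congr {A B : VGraph.{w} V} (h : A = B) (a a' : A.obj) :
    A.hom a a' = B.hom (cast (obj_congr h) a) (cast (obj_congr h) a') := by
  subst h; rfl

theorem ext' {A B : VGraph.{w} V} (hobj : A.obj = B.obj)
    (hhom : ∀ a a', A.hom a a' = B.hom (cast hobj a) (cast hobj a')) : A = B := by
  cases A with | mk OA hA =>
  cases B with | mk OB hB =>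
  dsimp only at hobj
  subst hobj
  have : hA = hB := by
    funext a a'
    simpa using hhom a a'
  rw [this]

theorem eqToHom_f {A B : VGraph.{w} V} (h : A = B) (a : A.obj) :
    (eqToHom h).f a = cast (obj_congr h) a := by subst h; rfl

theorem eqToHom_φ {A B : VGraph.{w} V} (h : A = B) (a a' : A.obj) :
    (eqToHom h).φ a a' =
      eqToHom (show A.hom a a' = B.hom ((eqToHom h).f a) ((eqToHom h).f a') by
        subst h; rfl) := by
  subst h; rfl

theorem Hom.ext'' {A B : VGraph.{w} V} {F G : A ⟶ B} (h1 : ∀ a, F.f a = G.f a)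
    (h2 : ∀ a a', HEq (F.φ a a') (G.φ a a')) : F = G := by
  cases F using VGraph.Hom.casesOn with | mk f φ =>
  cases G using VGraph.Hom.casesOn with | mk g ψ =>
  obtain rfl : f = g := funext h1
  have : φ = ψ := funext fun a => funext fun a' => eq_of_heq (h2 a a')
  rw [this]

theorem Hom.hext2 {A A' B B' : VGraph.{w} V} (hA : A = A') (hB : B = B')
    {F : A ⟶ B} {G : A' ⟶ B'}
    (h1 : ∀ (a : A.obj) (b : A'.obj), HEq a b → HEq (F.f a) (G.f b))
    (h2 : ∀ (a a' : A.obj) (b b' : A'.obj), HEq a b → HEq a' b' →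
      HEq (F.φ a a') (G.φ b b')) :
    HEq F G := by
  subst hA; subst hB
  exact heq_of_eq (Hom.ext'' (fun a => eq_of_heq (h1 a a HEq.rfl))
    (fun a a' => h2 a a' a a' HEq.rfl HEq.rfl))

theorem Hom.f_heq {A A' B B' : VGraph.{w} V} (hA : A = A') (hB : B = B')
    {F : A ⟶ B} {G : A' ⟶ B'} (h : HEq F G) {a : A.obj} {b : A'.obj} (hab : HEq a b) :
    HEq (F.f a) (G.f b) := by
  subst hA; subst hB; cases h; cases hab; rfl

theorem Hom.φ_heq {A A' B B' : VGraph.{w} V} (hA : A = A') (hB : B = B')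
    {F : A ⟶ B} {G : A' ⟶ B'} (h : HEq F G) {a a' : A.obj} {b b' : A'.obj}
    (hab : HEq a b) (hab' : HEq a' b') : HEq (F.φ a a') (G.φ b b') := by
  subst hA; subst hB; cases h; cases hab; cases hab'; rfl

theorem Hom.φ_conj {A B : VGraph.{w} V} (F : A ⟶ B) {a₁ a₁' a₂ a₂' : A.obj}
    (h : a₂ = a₁) (h' : a₂' = a₁') :
    F.φ a₁ a₁' = eqToHom (by rw [h, h']) ≫ F.φ a₂ a₂' ≫ eqToHom (by rw [h, h']) := by
  subst h; subst h'; simp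

end VGraph

theorem map_heq_of_heq {C : Type u'} {D : Type u''} [Category.{v'} C] [Category.{v''} D]
    (F : C ⥤ D) {X Y Y' : C} (h : Y = Y') {f : X ⟶ Y} {g : X ⟶ Y'} (hfg : HEq f g) :
    HEq (F.map f) (F.map g) := by
  subst h; cases hfg; rfl

end AuxToolkit
namespace VGraphLim

open Opposite

variable (tower : ℕᵒᵖ ⥤ Cat.{u, u + 1}) (s : Cone (tower ⋙ vgraphEndofunctor.{u}))

def toZero (j : ℕᵒᵖ) : j ⟶ op (0 : ℕ) := (homOfLE (Nat.zero_le j.unop)).op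

theorem wπ {j k : ℕᵒᵖ} (f : j ⟶ k) :
    ((s.π.app j).toFunctor ⋙ mapGraph (tower.map f).toFunctor) = (s.π.app k).toFunctor :=
  congrArg Cat.Hom.toFunctor (s.w f)

theorem wobj {j k : ℕᵒᵖ} (f : j ⟶ k) (X : s.pt) :
    (mapGraph (tower.map f).toFunctor).obj ((s.π.app j).toFunctor.obj X) = (s.π.app k).toFunctor.obj X :=
  Functor.congr_obj (wπ tower s f) X

def O (X : s.pt) : Type u := ((s.π.app (op (0 : ℕ))).toFunctor.obj X).obj

theorem objEq (j : ℕᵒᵖ) (X : s.pt) : ((s.π.app j).toFunctor.obj X).obj = O tower s X :=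
  VGraph.obj_congr (wobj tower s (toZero j) X)

def ca (j : ℕᵒᵖ) {X : s.pt} (a : O tower s X) : ((s.π.app j).toFunctor.obj X).obj :=
  cast (objEq tower s j X).symm a

theorem ca_heq (j : ℕᵒᵖ) {X : s.pt} (a : O tower s X) : HEq (ca tower s j a) a :=
  cast_heq _ _

def hObj (j : ℕᵒᵖ) {X : s.pt} (a a' : O tower s X) : tower.obj j :=
  ((s.π.app j).toFunctor.obj X).hom (ca tower s j a) (ca tower s j a')

theorem hObj_w {j k : ℕᵒᵖ} (f : j ⟶ k) {X : s.pt} (a a' : O tower s X) :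
    (tower.map f).toFunctor.obj (hObj tower s j a a') = hObj tower s k a a' := by
  refine (VGraph.hom_congr (wobj tower s f X) (ca tower s j a) (ca tower s j a')).trans ?_
  congr 1 <;>
    exact eq_of_heq ((cast_heq _ _).trans ((ca_heq tower s j _).trans (ca_heq tower s k _).symm))

def fm {X Y : s.pt} (F : X ⟶ Y) : O tower s X → O tower s Y :=
  ((s.π.app (op (0 : ℕ))).toFunctor.map F).f

theorem fm_id (X : s.pt) : fm tower s (𝟙 X) = id := by
  show ((s.π.app (op (0 : ℕ))).toFunctor.map (𝟙 X)).f = id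
  rw [CategoryTheory.Functor.map_id]; rfl

theorem fm_comp {X Y Z : s.pt} (F : X ⟶ Y) (G : Y ⟶ Z) :
    fm tower s (F ≫ G) = fm tower s G ∘ fm tower s F := by
  show ((s.π.app (op (0 : ℕ))).toFunctor.map (F ≫ G)).f = _
  rw [CategoryTheory.Functor.map_comp]; rfl

theorem f_w (j : ℕᵒᵖ) {X Y : s.pt} (F : X ⟶ Y) (a : O tower s X) :
    ((s.π.app j).toFunctor.map F).f (ca tower s j a) = ca tower s j (fm tower s F a) := by
  apply eq_of_heq
  refine HEq.trans (VGraph.Hom.f_heq (wobj tower s (toZero j) X) (wobj tower s (toZero j) Y)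
    (Functor.hcongr_hom (wπ tower s (toZero j)) F) (ca_heq tower s j a)) ?_
  exact (ca_heq tower s j _).symm
abbrev EObj : Type (u + 1) := Σ X : s.pt, O tower s X × O tower s X

instance : Category.{u} (EObj tower s) where
  Hom P Q := { F : P.1 ⟶ Q.1 // fm tower s F P.2.1 = Q.2.1 ∧ fm tower s F P.2.2 = Q.2.2 }
  id P := ⟨𝟙 P.1, by rw [fm_id]; exact ⟨rfl, rfl⟩⟩
  comp {P Q R} F G := ⟨F.1 ≫ G.1, by
    rw [fm_comp]
    exact ⟨by simp only [Function.comp_apply, F.2.1, G.2.1],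
           by simp only [Function.comp_apply, F.2.2, G.2.2]⟩⟩
  id_comp F := Subtype.ext (Category.id_comp F.1)
  comp_id F := Subtype.ext (Category.comp_id F.1)
  assoc F G H := Subtype.ext (Category.assoc F.1 G.1 H.1)

theorem ehom_hext {P Q Q' : EObj tower s} (h : Q = Q') (F : P ⟶ Q) (G : P ⟶ Q')
    (hFG : HEq F.1 G.1) : HEq F G := by
  subst h; exact heq_of_eq (Subtype.ext (eq_of_heq hFG))

def coneFun (j : ℕᵒᵖ) : EObj tower s ⥤ tower.obj j where
  obj P := hObj tower s j P.2.1 P.2.2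
  map {P Q} F :=
    ((s.π.app j).toFunctor.map F.1).φ (ca tower s j P.2.1) (ca tower s j P.2.2) ≫
      eqToHom (by rw [f_w, f_w, F.2.1, F.2.2]; rfl)
  map_id P := by
    apply eq_of_heq
    refine HEq.trans (comp_eqToHom_heq _ _) ?_
    have m : ((s.π.app j).toFunctor.map (𝟙 P : P ⟶ P).1) = 𝟙 ((s.π.app j).toFunctor.obj P.1) := by
      rw [show (𝟙 P : P ⟶ P).1 = 𝟙 P.1 from rfl, CategoryTheory.Functor.map_id]
    exact VGraph.Hom.φ_heq rfl rfl (heq_of_eq m) HEq.rfl HEq.rfl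
  map_comp {P Q R} F G := by
    have hx : ca tower s j Q.2.1 = ((s.π.app j).toFunctor.map F.1).f (ca tower s j P.2.1) := by
      rw [f_w, F.2.1]
    have hy : ca tower s j Q.2.2 = ((s.π.app j).toFunctor.map F.1).f (ca tower s j P.2.2) := by
      rw [f_w, F.2.2]
    have hm : (s.π.app j).toFunctor.map (F ≫ G : P ⟶ R).1
        = (s.π.app j).toFunctor.map F.1 ≫ (s.π.app j).toFunctor.map G.1 := by
      rw [show (F ≫ G : P ⟶ R).1 = F.1 ≫ G.1 from rfl,
        CategoryTheory.Functor.map_comp]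
    have hr : (((s.π.app j).toFunctor.map F.1).φ (ca tower s j P.2.1) (ca tower s j P.2.2) ≫
          eqToHom (by rw [f_w, f_w, F.2.1, F.2.2])) ≫
        (((s.π.app j).toFunctor.map G.1).φ (ca tower s j Q.2.1) (ca tower s j Q.2.2) ≫
          eqToHom (by rw [f_w, f_w, G.2.1, G.2.2])) =
        ((s.π.app j).toFunctor.map F.1).φ (ca tower s j P.2.1) (ca tower s j P.2.2) ≫
        (((s.π.app j).toFunctor.map G.1).φ (((s.π.app j).toFunctor.map F.1).f (ca tower s j P.2.1))
            (((s.π.app j).toFunctor.map F.1).f (ca tower s j P.2.2)) ≫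
          eqToHom (by rw [← hx, ← hy, f_w, f_w, G.2.1, G.2.2])) := by
      rw [VGraph.Hom.φ_conj ((s.π.app j).toFunctor.map G.1) hx.symm hy.symm]
      simp only [Category.assoc, eqToHom_trans, eqToHom_trans_assoc, eqToHom_refl,
        Category.id_comp]
    apply eq_of_heq
    refine HEq.trans (comp_eqToHom_heq _ _) ?_
    refine HEq.trans (VGraph.Hom.φ_heq rfl rfl (heq_of_eq hm) HEq.rfl HEq.rfl) ?_
    refine HEq.trans (heq_of_eq (VGraph.comp_φ' _ _ _ _)) (HEq.trans ?_ (heq_of_eq hr.symm))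
    refine HEq.trans ?_ (heq_of_eq (Category.assoc _ _ _))
    exact (comp_eqToHom_heq _ _).symm
theorem coneFun_w {j k : ℕᵒᵖ} (f : j ⟶ k) :
    coneFun tower s j ⋙ (tower.map f).toFunctor = coneFun tower s k := by
  apply Functor.hext
  · intro P
    exact hObj_w tower s f P.2.1 P.2.2
  · intro P Q F
    refine HEq.trans (heq_of_eq ((tower.map f).toFunctor.map_comp _ _)) ?_
    refine HEq.trans (heq_of_eq (congrArg (CategoryStruct.comp _) (eqToHom_map (tower.map f).toFunctor _))) ?_
    simp only [comp_eqToHom_heq_iff]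
    refine HEq.trans ?_ (comp_eqToHom_heq _ _).symm
    exact VGraph.Hom.φ_heq (wobj tower s f P.1) (wobj tower s f Q.1)
      (Functor.hcongr_hom (wπ tower s f) F.1)
      ((ca_heq tower s j _).trans (ca_heq tower s k _).symm)
      ((ca_heq tower s j _).trans (ca_heq tower s k _).symm)

def κ : Cone tower where
  pt := Cat.of (EObj tower s)
  π :=
    { app := fun j => (coneFun tower s j).toCatHom
      naturality := fun j k f => by
        refine (Category.id_comp _).trans ?_
        exact Cat.ext (coneFun_w tower s f).symm }

section LimitPart

variable (c : Cone tower) (hc : IsLimit c)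

def lifted : EObj tower s ⥤ c.pt := (hc.lift (κ tower s)).toFunctor

def L : s.pt ⥤ VGraph.{u} c.pt where
  obj X := ⟨O tower s X, fun a a' => (lifted tower s c hc).obj ⟨X, (a, a')⟩⟩
  map {X Y} F := ⟨fm tower s F, fun a a' =>
    (lifted tower s c hc).map
      (⟨F, rfl, rfl⟩ : (⟨X, (a, a')⟩ : EObj tower s) ⟶ ⟨Y, (fm tower s F a, fm tower s F a')⟩)⟩
  map_id X := by
    apply VGraph.Hom.ext''
    · intro a
      show fm tower s (𝟙 X) a = a
      rw [fm_id]; rfl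
    · intro a a'
      have hQ : (⟨X, (fm tower s (𝟙 X) a, fm tower s (𝟙 X) a')⟩ : EObj tower s)
          = ⟨X, (a, a')⟩ := by rw [fm_id]; rfl
      have h1 : HEq (⟨𝟙 X, rfl, rfl⟩ :
            (⟨X, (a, a')⟩ : EObj tower s) ⟶ ⟨X, (fm tower s (𝟙 X) a, fm tower s (𝟙 X) a')⟩)
          (𝟙 (⟨X, (a, a')⟩ : EObj tower s)) :=
        ehom_hext tower s hQ _ _ HEq.rfl
      exact (map_heq_of_heq (lifted tower s c hc) hQ h1).trans
        (heq_of_eq ((lifted tower s c hc).map_id _))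
  map_comp {X Y Z} F G := by
    apply VGraph.Hom.ext''
    · intro a
      show fm tower s (F ≫ G) a = fm tower s G (fm tower s F a)
      rw [fm_comp]; rfl
    · intro a a'
      have hQ : (⟨Z, (fm tower s (F ≫ G) a, fm tower s (F ≫ G) a')⟩ : EObj tower s)
          = ⟨Z, (fm tower s G (fm tower s F a), fm tower s G (fm tower s F a'))⟩ := by
        rw [fm_comp]; rfl
      have h1 : HEq (⟨F ≫ G, rfl, rfl⟩ :
            (⟨X, (a, a')⟩ : EObj tower s) ⟶ ⟨Z, (fm tower s (F ≫ G) a, fm tower s (F ≫ G) a')⟩)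
          ((⟨F, rfl, rfl⟩ :
              (⟨X, (a, a')⟩ : EObj tower s) ⟶ ⟨Y, (fm tower s F a, fm tower s F a')⟩) ≫
            (⟨G, rfl, rfl⟩ : (⟨Y, (fm tower s F a, fm tower s F a')⟩ : EObj tower s) ⟶
              ⟨Z, (fm tower s G (fm tower s F a), fm tower s G (fm tower s F a'))⟩)) :=
        ehom_hext tower s hQ _ _ HEq.rfl
      exact (map_heq_of_heq (lifted tower s c hc) hQ h1).trans
        (heq_of_eq ((lifted tower s c hc).map_comp _ _))

theorem L_obj_fac (j : ℕᵒᵖ) (X : s.pt) :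
    (mapGraph (c.π.app j).toFunctor).obj ((L tower s c hc).obj X) = (s.π.app j).toFunctor.obj X := by
  refine VGraph.ext' (objEq tower s j X).symm fun a a' => ?_
  exact Functor.congr_obj (congrArg Cat.Hom.toFunctor (hc.fac (κ tower s) j)) (⟨X, (a, a')⟩ : EObj tower s)

theorem L_fac (j : ℕᵒᵖ) :
    (L tower s c hc ⋙ mapGraph (c.π.app j).toFunctor : s.pt ⥤ VGraph.{u} (tower.obj j))
      = (s.π.app j).toFunctor := by
  apply Functor.hext
  · intro X
    exact L_obj_fac tower s c hc j X
  · intro X Y F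
    refine VGraph.Hom.hext2 (L_obj_fac tower s c hc j X) (L_obj_fac tower s c hc j Y) ?_ ?_
    · intro a b hab
      obtain rfl : b = ca tower s j a := eq_of_heq (hab.symm.trans (ca_heq tower s j a).symm)
      refine HEq.trans ?_ (heq_of_eq (f_w tower s j F a)).symm
      exact (ca_heq tower s j _).symm
    · intro a a' b b' hb hb'
      obtain rfl : b = ca tower s j a := eq_of_heq (hb.symm.trans (ca_heq tower s j a).symm)
      obtain rfl : b' = ca tower s j a' := eq_of_heq (hb'.symm.trans (ca_heq tower s j a').symm)
      have h3 := Functor.hcongr_hom (congrArg Cat.Hom.toFunctor (hc.fac (κ tower s) j))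
        (⟨F, rfl, rfl⟩ : (⟨X, (a, a')⟩ : EObj tower s) ⟶ ⟨Y, (fm tower s F a, fm tower s F a')⟩)
      exact h3.trans (comp_eqToHom_heq _ _)

end LimitPart

end VGraphLim
namespace VGraphLim2

open Opposite VGraphLim

variable {tower : ℕᵒᵖ ⥤ Cat.{u, u + 1}} {c : Cone tower}

theorem not_true_le_false : ¬((true : Bool) ≤ false) := by decide

theorem hom_ext (hc : IsLimit c) {D : Cat.{u, u + 1}} (m₁ m₂ : D ⟶ c.pt)
    (h : ∀ j, m₁ ≫ c.π.app j = m₂ ≫ c.π.app j) : m₁ = m₂ := by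
  let s' : Cone tower :=
    { pt := D
      π :=
        { app := fun j => m₂ ≫ c.π.app j
          naturality := fun j k f => by
            show m₂ ≫ c.π.app k = (m₂ ≫ c.π.app j) ≫ tower.map f
            rw [Category.assoc, c.w f] } }
  rw [hc.uniq s' m₁ h, hc.uniq s' m₂ fun j => rfl]

abbrev PtCat : Type (u + 1) := PUnit.{u + 2}

instance : Category.{u} PtCat where
  Hom _ _ := PUnit.{u + 1}
  id _ := ⟨⟩
  comp _ _ := ⟨⟩

def ptFun (v : c.pt) : PtCat ⥤ c.pt where
  obj _ := v
  map _ := 𝟙 v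

theorem obj_ext (hc : IsLimit c) {v v' : c.pt} (h : ∀ j, (c.π.app j).toFunctor.obj v = (c.π.app j).toFunctor.obj v') :
    v = v' := by
  have key : (ptFun v : PtCat ⥤ c.pt).toCatHom = (ptFun v').toCatHom := by
    apply hom_ext hc (D := Cat.of PtCat)
    intro j
    apply Cat.ext
    apply Functor.hext
    · intro _; exact h j
    · intro _ _ f
      show HEq ((c.π.app j).toFunctor.map (𝟙 v)) ((c.π.app j).toFunctor.map (𝟙 v'))
      rw [CategoryTheory.Functor.map_id, CategoryTheory.Functor.map_id, h j]
  exact Functor.congr_obj (congrArg Cat.Hom.toFunctor key) ⟨⟩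

abbrev WkCat : Type (u + 1) := ULift.{u + 1} Bool

instance : Category.{u} WkCat where
  Hom a b := ULift.{u} (PLift (a.down ≤ b.down))
  id a := ⟨⟨le_refl _⟩⟩
  comp f g := ⟨⟨le_trans f.down.down g.down.down⟩⟩
  id_comp _ := rfl
  comp_id _ := rfl
  assoc _ _ _ := rfl

def wkArrow : (⟨false⟩ : WkCat) ⟶ (⟨true⟩ : WkCat) := ⟨⟨Bool.false_le _⟩⟩

def wkFun {v w : c.pt} (g : v ⟶ w) : WkCat ⥤ c.pt where
  obj a := bif a.down then w else v
  map {a b} f :=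
    match a, b, f with
    | ⟨false⟩, ⟨false⟩, _ => 𝟙 v
    | ⟨false⟩, ⟨true⟩, _ => g
    | ⟨true⟩, ⟨true⟩, _ => 𝟙 w
    | ⟨true⟩, ⟨false⟩, f => absurd f.down.down not_true_le_false
  map_id a := by rcases a with ⟨a⟩; cases a <;> rfl
  map_comp {a b e} f g' := by
    rcases a with ⟨a⟩; rcases b with ⟨b⟩; rcases e with ⟨e⟩
    cases a <;> cases b <;> cases e <;>
      first
        | exact absurd f.down.down not_true_le_false
        | exact absurd g'.down.down not_true_le_false
        | simp

theorem map_ext (hc : IsLimit c) {v w : c.pt} (g g' : v ⟶ w)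
    (h : ∀ j, (c.π.app j).toFunctor.map g = (c.π.app j).toFunctor.map g') : g = g' := by
  have key : (wkFun g : WkCat ⥤ c.pt).toCatHom = (wkFun g').toCatHom := by
    apply hom_ext hc (D := Cat.of WkCat)
    intro j
    apply Cat.ext
    apply Functor.hext
    · intro a; rcases a with ⟨a⟩; cases a <;> rfl
    · intro a b f
      rcases a with ⟨a⟩; rcases b with ⟨b⟩
      cases a <;> cases b
      · exact HEq.rfl
      · exact heq_of_eq (h j)
      · exact absurd f.down.down not_true_le_false
      · exact HEq.rfl
  have := Functor.hcongr_hom (congrArg Cat.Hom.toFunctor key) wkArrow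
  exact eq_of_heq this

end VGraphLim2

/-- The endofunctor `V ↦ V-Gph` preserves limits of inverse sequences of categories: if
`V` is the limit in `CAT` of a tower `⋯ → V₂ → V₁ → V₀`, then `V-Gph` is canonically the
limit of `⋯ → V₂-Gph → V₁-Gph → V₀-Gph` (connecting functors obtained by applying
`(−)₊`). -/
theorem vgraph_preserves_sequential_limits (tower : ℕᵒᵖ ⥤ Cat.{u, u + 1})
    (c : Cone tower) (hc : IsLimit c) :
    Nonempty (IsLimit (vgraphEndofunctor.mapCone c)) := by
  constructor
  refine
    { lift := fun s => (VGraphLim.L tower s c hc).toCatHom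
      fac := fun s j => Cat.ext (VGraphLim.L_fac tower s c hc j)
      uniq := fun s m hw => ?_ }
  let M : ↑s.pt ⥤ VGraph.{u} ↑c.pt := m.toFunctor
  suffices h : M = VGraphLim.L tower s c hc by exact Cat.ext h
  have q : ∀ j, (M ⋙ mapGraph (c.π.app j).toFunctor : ↑s.pt ⥤ VGraph.{u} (tower.obj j))
      = VGraphLim.L tower s c hc ⋙ mapGraph (c.π.app j).toFunctor :=
    fun j => (congrArg Cat.Hom.toFunctor (hw j)).trans (VGraphLim.L_fac tower s c hc j).symm
  have hobj : ∀ X : s.pt, M.obj X = (VGraphLim.L tower s c hc).obj X := by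
    intro X
    have hO : (M.obj X).obj = VGraphLim.O tower s X :=
      VGraph.obj_congr (Functor.congr_obj (q (Opposite.op 0)) X)
    refine VGraph.ext' hO fun a a' => ?_
    apply VGraphLim2.obj_ext hc
    intro j
    refine (VGraph.hom_congr (Functor.congr_obj (q j) X) a a').trans ?_
    have e1 : cast (VGraph.obj_congr (Functor.congr_obj (q j) X)) a = cast hO a :=
      eq_of_heq ((cast_heq _ _).trans (cast_heq _ _).symm)
    have e2 : cast (VGraph.obj_congr (Functor.congr_obj (q j) X)) a' = cast hO a' :=
      eq_of_heq ((cast_heq _ _).trans (cast_heq _ _).symm)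
    rw [e1, e2]
    rfl
  apply Functor.hext hobj
  intro X Y F
  refine VGraph.Hom.hext2 (hobj X) (hobj Y) ?_ ?_
  · intro a b hab
    exact VGraph.Hom.f_heq (Functor.congr_obj (q (Opposite.op 0)) X)
      (Functor.congr_obj (q (Opposite.op 0)) Y)
      (Functor.hcongr_hom (q (Opposite.op 0)) F) hab
  · intro a a' b b' hb hb'
    have hφj : ∀ j, HEq ((c.π.app j).toFunctor.map ((M.map F).φ a a'))
        ((c.π.app j).toFunctor.map (((VGraphLim.L tower s c hc).map F).φ b b')) :=
      fun j => VGraph.Hom.φ_heq (Functor.congr_obj (q j) X) (Functor.congr_obj (q j) Y)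
        (Functor.hcongr_hom (q j) F) hb hb'
    have hfa : HEq ((M.map F).f a) (VGraphLim.fm tower s F b) :=
      VGraph.Hom.f_heq (Functor.congr_obj (q (Opposite.op 0)) X)
        (Functor.congr_obj (q (Opposite.op 0)) Y)
        (Functor.hcongr_hom (q (Opposite.op 0)) F) hb
    have hfa' : HEq ((M.map F).f a') (VGraphLim.fm tower s F b') :=
      VGraph.Hom.f_heq (Functor.congr_obj (q (Opposite.op 0)) X)
        (Functor.congr_obj (q (Opposite.op 0)) Y)
        (Functor.hcongr_hom (q (Opposite.op 0)) F) hb'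
    have hv : (M.obj X).hom a a'
        = ((VGraphLim.L tower s c hc).obj X).hom b b' := by
      refine (VGraph.hom_congr (hobj X) a a').trans ?_
      exact congr_arg₂ (((VGraphLim.L tower s c hc).obj X).hom)
        (eq_of_heq ((cast_heq _ _).trans hb))
        (eq_of_heq ((cast_heq _ _).trans hb'))
    have hw' : (M.obj Y).hom ((M.map F).f a) ((M.map F).f a')
        = ((VGraphLim.L tower s c hc).obj Y).hom
          (VGraphLim.fm tower s F b) (VGraphLim.fm tower s F b') := by
      refine (VGraph.hom_congr (hobj Y) _ _).trans ?_
      exact congr_arg₂ (((VGraphLim.L tower s c hc).obj Y).hom)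
        (eq_of_heq ((cast_heq _ _).trans hfa))
        (eq_of_heq ((cast_heq _ _).trans hfa'))
    refine (conj_eqToHom_iff_heq' _ _ hv hw'.symm).mp ?_
    apply VGraphLim2.map_ext hc
    intro j
    have hm1 := (c.π.app j).toFunctor.map_comp (eqToHom hv)
      (((VGraphLim.L tower s c hc).map F).φ b b' ≫ eqToHom hw'.symm)
    have hm2 := (c.π.app j).toFunctor.map_comp (((VGraphLim.L tower s c hc).map F).φ b b')
      (eqToHom hw'.symm)
    refine Eq.trans ?_ hm1.symm
    refine Eq.trans ?_ (congrArg₂ CategoryStruct.comp (eqToHom_map (c.π.app j).toFunctor hv)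
      (hm2.trans (congrArg (CategoryStruct.comp _) (eqToHom_map (c.π.app j).toFunctor hw'.symm)))).symm
    exact (conj_eqToHom_iff_heq' _ _ _ _).mpr (hφj j)
end
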